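/- For every integer n ≥ 1, the integral I_n = ∫₀^∞ (ln(1+u²))ⁿ / u² du is finite, and lim_{f→0+} f^{−1/2} · ∫₀^∞ (ln((1−f) + f x²))ⁿ / (1 + x²) dx = I_n. -/

import Mathlib

open Real MeasureTheory Filter Topology

open Set

lemma aux_meas (n : ℕ) : Measurable (fun u : ℝ => (Real.log (1 + u ^ 2)) ^ n / u ^ 2) := by
  exact ((Real.measurable_log.comp (by fun_prop)).pow measurable_const).div (by fun_prop)

lemma aux_int (n : ℕ) (hn : 1 ≤ n) :
    IntegrableOn (fun u => (Real.log (1 + u ^ 2)) ^ n / u ^ 2) (Set.Ioi (0 : ℝ)) := by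
  have h01 : IntegrableOn (fun u => (Real.log (1 + u ^ 2)) ^ n / u ^ 2) (Set.Ioc (0:ℝ) 1) := by
    have hc : IntegrableOn (fun _ : ℝ => (1:ℝ)) (Set.Ioc (0:ℝ) 1) :=
      integrableOn_const measure_Ioc_lt_top.ne
    refine Integrable.mono' hc (aux_meas n).aestronglyMeasurable ?_
    · refine (ae_restrict_iff' measurableSet_Ioc).2 (ae_of_all _ fun u hu => ?_)
      obtain ⟨hu0, hu1⟩ := hu
      have hl0 : 0 ≤ Real.log (1 + u ^ 2) := Real.log_nonneg (by nlinarith)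
      have hl : Real.log (1 + u ^ 2) ≤ u ^ 2 := by
        have := Real.log_le_sub_one_of_pos (show (0:ℝ) < 1 + u ^ 2 by positivity)
        linarith
      have h1 : Real.log (1 + u ^ 2) ^ n ≤ (u ^ 2) ^ n := pow_le_pow_left₀ hl0 hl n
      have h2 : (u ^ 2) ^ n ≤ u ^ 2 := by
        rw [← pow_mul]
        exact pow_le_pow_of_le_one (le_of_lt hu0) hu1 (by omega)
      rw [Real.norm_eq_abs, abs_of_nonneg (by positivity)]
      rw [div_le_one (by positivity)]
      exact h1.trans h2
  have h1i : IntegrableOn (fun u => (Real.log (1 + u ^ 2)) ^ n / u ^ 2) (Set.Ioi (1:ℝ)) := by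
    set C : ℝ := (8 * n) ^ n with hC
    have hc : IntegrableOn (fun u : ℝ => C * u ^ (-3/2 : ℝ)) (Set.Ioi (1:ℝ)) :=
      (integrableOn_Ioi_rpow_of_lt (show (-3/2 : ℝ) < -1 by norm_num) one_pos).const_mul C
    refine Integrable.mono' hc (aux_meas n).aestronglyMeasurable ?_
    · refine (ae_restrict_iff' measurableSet_Ioi).2 (ae_of_all _ fun u hu => ?_)
      have hu1 : (1:ℝ) < u := hu
      have hu0 : (0:ℝ) < u := by linarith
      have hnn : (1:ℝ) ≤ n := by exact_mod_cast hn
      have hε : (0:ℝ) < 1 / (4 * n) := by positivity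
      have hlog : Real.log (1 + u ^ 2) ≤ (8 * n) * u ^ (1 / (2 * (n:ℝ))) := by
        have h1 := Real.log_le_rpow_div (show (0:ℝ) ≤ 1 + u ^ 2 by positivity) hε
        have h2 : (1 + u ^ 2 : ℝ) ≤ (2 * u ^ 2) := by nlinarith
        have h3 : ((1 + u ^ 2 : ℝ)) ^ (1 / (4 * (n:ℝ))) ≤ (2 * u ^ 2) ^ (1 / (4 * (n:ℝ))) :=
          Real.rpow_le_rpow (by positivity) h2 (le_of_lt hε)
        have h4 : ((2 : ℝ) * u ^ 2) ^ (1 / (4 * (n:ℝ))) ≤ 2 * u ^ (1 / (2 * (n:ℝ))) := by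
          rw [Real.mul_rpow (by norm_num) (by positivity)]
          have h5 : (2:ℝ) ^ (1 / (4 * (n:ℝ))) ≤ 2 := by
            calc (2:ℝ) ^ (1 / (4 * (n:ℝ))) ≤ 2 ^ (1:ℝ) :=
              Real.rpow_le_rpow_of_exponent_le (by norm_num) (by
                rw [div_le_one (by nlinarith)]; nlinarith)
            _ = 2 := Real.rpow_one 2
          have h6 : (u ^ 2 : ℝ) ^ (1 / (4 * (n:ℝ))) = u ^ (1 / (2 * (n:ℝ))) := by
            rw [← Real.rpow_natCast u 2, ← Real.rpow_mul (le_of_lt hu0)]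
            norm_num
            ring_nf
          rw [h6]
          exact mul_le_mul_of_nonneg_right h5 (Real.rpow_nonneg (le_of_lt hu0) _)
        calc Real.log (1 + u ^ 2) ≤ (1 + u ^ 2) ^ (1 / (4 * (n:ℝ))) / (1 / (4 * n)) := h1
          _ = 4 * n * (1 + u ^ 2) ^ (1 / (4 * (n:ℝ))) := by field_simp
          _ ≤ 4 * n * (2 * u ^ (1 / (2 * (n:ℝ)))) := by
              apply mul_le_mul_of_nonneg_left (h3.trans h4) (by positivity)
          _ = (8 * n) * u ^ (1 / (2 * (n:ℝ))) := by ring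
      have hl0 : 0 ≤ Real.log (1 + u ^ 2) := Real.log_nonneg (by nlinarith)
      have hpow : Real.log (1 + u ^ 2) ^ n ≤ C * u ^ ((1:ℝ)/2) := by
        calc Real.log (1 + u ^ 2) ^ n ≤ ((8 * n) * u ^ (1 / (2 * (n:ℝ)))) ^ n :=
              pow_le_pow_left₀ hl0 hlog n
          _ = C * (u ^ (1 / (2 * (n:ℝ)))) ^ n := by rw [mul_pow]
          _ = C * u ^ ((1:ℝ)/2) := by
              rw [← Real.rpow_natCast (u ^ (1 / (2 * (n:ℝ)))) n, ← Real.rpow_mul (le_of_lt hu0)]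
              congr 2
              field_simp
      rw [Real.norm_eq_abs, abs_of_nonneg (by positivity)]
      rw [div_le_iff₀ (by positivity)]
      calc Real.log (1 + u ^ 2) ^ n ≤ C * u ^ ((1:ℝ)/2) := hpow
        _ = C * u ^ (-3/2 : ℝ) * u ^ 2 := by
            rw [mul_assoc, ← Real.rpow_natCast u 2, ← Real.rpow_add hu0]
            norm_num
  have := h01.union h1i
  rwa [Set.Ioc_union_Ioi_eq_Ioi (by norm_num : (0:ℝ) ≤ 1)] at this

lemma aux_subst (n : ℕ) {f : ℝ} (hf : 0 < f) :
    (∫ x in Set.Ioi (0:ℝ), (Real.log ((1 - f) + f * x ^ 2)) ^ n / (1 + x ^ 2)) / Real.sqrt f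
    = ∫ u in Set.Ioi (0:ℝ), (Real.log ((1 - f) + u ^ 2)) ^ n / (f + u ^ 2) := by
  have hs : 0 < Real.sqrt f := Real.sqrt_pos.2 hf
  have key := integral_comp_mul_left_Ioi
    (fun u => (Real.log ((1 - f) + u ^ 2)) ^ n / (f + u ^ 2)) 0 hs
  simp only [mul_zero, smul_eq_mul] at key
  have heq : ∀ x : ℝ, (Real.log ((1 - f) + f * x ^ 2)) ^ n / (1 + x ^ 2)
      = f * ((Real.log ((1 - f) + (Real.sqrt f * x) ^ 2)) ^ n / (f + (Real.sqrt f * x) ^ 2)) := by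
    intro x
    have h1 : (Real.sqrt f * x) ^ 2 = f * x ^ 2 := by
      rw [mul_pow, Real.sq_sqrt hf.le]
    rw [h1, show f + f * x ^ 2 = f * (1 + x ^ 2) by ring]
    rw [mul_div_assoc']
    rw [mul_div_mul_left _ _ (ne_of_gt hf)]
  simp_rw [heq]
  rw [integral_const_mul, key]
  have hff : f = Real.sqrt f * Real.sqrt f := (Real.mul_self_sqrt hf.le).symm
  field_simp
  rw [Real.sq_sqrt hf.le]

lemma aux_dct (n : ℕ) (hn : 1 ≤ n) :
    Tendsto (fun f : ℝ => ∫ u in Set.Ioi (0:ℝ),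
        (Real.log ((1 - f) + u ^ 2)) ^ n / (f + u ^ 2))
      (𝓝[>] (0:ℝ))
      (𝓝 (∫ u in Set.Ioi (0:ℝ), (Real.log (1 + u ^ 2)) ^ n / u ^ 2)) := by
  apply tendsto_integral_filter_of_dominated_convergence
    (bound := fun u => (Set.Ioo (0:ℝ) 1).indicator (fun _ => (2:ℝ)^n) u
      + (Real.log (1 + u ^ 2)) ^ n / u ^ 2)
  · filter_upwards [] with f
    exact (((Real.measurable_log.comp (by fun_prop)).pow measurable_const).div
      (by fun_prop)).aestronglyMeasurable
  · filter_upwards [Ioo_mem_nhdsGT_of_mem (Set.left_mem_Ico.2 (by norm_num : (0:ℝ) < 1/2))]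
      with f hf
    obtain ⟨hf0, hf2⟩ := hf
    refine (ae_restrict_iff' measurableSet_Ioi).2 (ae_of_all _ fun u hu => ?_)
    have hu0 : (0:ℝ) < u := hu
    by_cases hcase : f ≤ u ^ 2
    · -- u² ≥ f : nonneg log, bound by second term
      have h1 : (1:ℝ) ≤ (1 - f) + u ^ 2 := by linarith
      have hl0 : 0 ≤ Real.log ((1 - f) + u ^ 2) := Real.log_nonneg h1
      have hle : Real.log ((1 - f) + u ^ 2) ≤ Real.log (1 + u ^ 2) :=
        Real.log_le_log (by linarith) (by linarith)
      have hnum : Real.log ((1 - f) + u ^ 2) ^ n ≤ Real.log (1 + u ^ 2) ^ n :=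
        pow_le_pow_left₀ hl0 hle n
      rw [Real.norm_eq_abs, abs_of_nonneg (by positivity)]
      have hmain : Real.log ((1 - f) + u ^ 2) ^ n / (f + u ^ 2)
          ≤ Real.log (1 + u ^ 2) ^ n / u ^ 2 :=
        div_le_div₀ (pow_nonneg (Real.log_nonneg (by nlinarith)) n) hnum (by positivity)
          (by nlinarith)
      have hind : 0 ≤ (Set.Ioo (0:ℝ) 1).indicator (fun _ => (2:ℝ)^n) u :=
        Set.indicator_nonneg (fun _ _ => by positivity) u
      linarith
    · -- u² < f : small region
      push_neg at hcase
      have hu1 : u < 1 := by nlinarith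
      have h1 : (0:ℝ) < (1 - f) + u ^ 2 := by nlinarith
      have h2 : (1 - f) + u ^ 2 ≤ 1 := by nlinarith
      have hlog_le : -Real.log ((1 - f) + u ^ 2) ≤ 2 * f := by
        have hlb : 1 - ((1 - f) + u ^ 2)⁻¹ ≤ Real.log ((1 - f) + u ^ 2) :=
          Real.one_sub_inv_le_log_of_pos h1
        have hinv : ((1 - f) + u ^ 2)⁻¹ ≤ (1 - f)⁻¹ := by
          apply inv_anti₀ (by linarith) (by nlinarith)
        have hinv2 : (1 - f)⁻¹ ≤ 1 + 2 * f := by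
          rw [inv_le_iff_one_le_mul₀ (by linarith)]
          nlinarith
        linarith
      have habs : |Real.log ((1 - f) + u ^ 2)| ≤ 2 * f := by
        rw [abs_of_nonpos (Real.log_nonpos (by linarith) h2)]
        exact hlog_le
      have hA : |Real.log ((1 - f) + u ^ 2)| ^ n ≤ 2 ^ n * f := by
        calc |Real.log ((1 - f) + u ^ 2)| ^ n ≤ (2 * f) ^ n :=
              pow_le_pow_left₀ (abs_nonneg _) habs n
          _ = 2 ^ n * f ^ n := mul_pow 2 f n
          _ ≤ 2 ^ n * f := by
              have : f ^ n ≤ f := pow_le_of_le_one hf0.le (by linarith) (by omega)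
              exact mul_le_mul_of_nonneg_left this (by positivity)
      rw [Real.norm_eq_abs, abs_div, abs_of_nonneg (by positivity : (0:ℝ) ≤ f + u ^ 2),
        abs_pow]
      have hmain : |Real.log ((1 - f) + u ^ 2)| ^ n / (f + u ^ 2) ≤ 2 ^ n := by
        rw [div_le_iff₀ (by positivity)]
        calc |Real.log ((1 - f) + u ^ 2)| ^ n ≤ 2 ^ n * f := hA
          _ ≤ 2 ^ n * (f + u ^ 2) := by
              nlinarith [pow_nonneg (show (0:ℝ) ≤ 2 by norm_num) n, sq_nonneg u]
      have hind : (Set.Ioo (0:ℝ) 1).indicator (fun _ => (2:ℝ)^n) u = 2 ^ n :=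
        Set.indicator_of_mem (Set.mem_Ioo.2 ⟨hu0, hu1⟩) _
      have hpos : 0 ≤ Real.log (1 + u ^ 2) ^ n / u ^ 2 := by
        have : 0 ≤ Real.log (1 + u ^ 2) := Real.log_nonneg (by nlinarith)
        positivity
      rw [hind]
      linarith
  · apply Integrable.add
    · exact ((integrable_indicator_iff measurableSet_Ioo).2
        (integrableOn_const measure_Ioo_lt_top.ne)).restrict
    · exact aux_int n hn
  · refine (ae_restrict_iff' measurableSet_Ioi).2 (ae_of_all _ fun u hu => ?_)
    have hu0 : (0:ℝ) < u := hu
    have hne : ((1:ℝ) - 0) + u ^ 2 ≠ 0 := by norm_num; positivity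
    have hc : ContinuousAt (fun f : ℝ => (Real.log ((1 - f) + u ^ 2)) ^ n / (f + u ^ 2)) 0 := by
      apply ContinuousAt.div
      · have hinner : ContinuousAt (fun f : ℝ => (1 - f) + u ^ 2) 0 := by fun_prop
        have h2 : ContinuousAt Real.log ((fun f : ℝ => (1 - f) + u ^ 2) 0) :=
          Real.continuousAt_log hne
        exact (ContinuousAt.comp (g := Real.log) (f := fun f : ℝ => (1 - f) + u ^ 2)
          (x := 0) h2 hinner).pow n
      · fun_prop
      · show (0:ℝ) + u ^ 2 ≠ 0; positivity
    have h3 := hc.tendsto.mono_left (nhdsWithin_le_nhds (s := Set.Ioi (0:ℝ)))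
    simpa using h3

/-- for every integer `n ≥ 1`, the integral
`I_n = ∫₀^∞ (log(1+u²))ⁿ / u² du` is finite, and
`f^{-1/2} ∫₀^∞ (log((1-f) + f x²))ⁿ / (1+x²) dx → I_n` as `f → 0+`. -/
theorem squared_cauchy_scaling_limit (n : ℕ) (hn : 1 ≤ n) :
    IntegrableOn (fun u => (Real.log (1 + u ^ 2)) ^ n / u ^ 2) (Set.Ioi (0 : ℝ))
    ∧ Tendsto
        (fun f : ℝ =>
          (∫ x in Set.Ioi (0 : ℝ), (Real.log ((1 - f) + f * x ^ 2)) ^ n / (1 + x ^ 2))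
            / Real.sqrt f)
        (𝓝[>] (0 : ℝ))
        (𝓝 (∫ u in Set.Ioi (0 : ℝ), (Real.log (1 + u ^ 2)) ^ n / u ^ 2)) := by
  refine ⟨aux_int n hn, ?_⟩
  apply (aux_dct n hn).congr'
  filter_upwards [self_mem_nhdsWithin] with f hf
  exact (aux_subst n hf).symm
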